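/- For p, q > 1 and x ∈ (0,1), one has arcsin_{p,q}(x) > x·(1 + x^q/(p(1+q))). -/

import Mathlib

open Real Set

noncomputable def arcsinpq (p q x : ℝ) : ℝ :=
  ∫ t in (0:ℝ)..x, (1 - t ^ q) ^ (-1/p)

theorem stmt0 (p q x : ℝ) (hp : 1 < p) (hq : 1 < q) (hx : x ∈ Ioo (0:ℝ) 1) :
    x * (1 + x ^ q / (p * (1 + q))) < arcsinpq p q x := by
  obtain ⟨hx0, hx1⟩ := hx
  have hp0 : (0:ℝ) < p := by linarith
  have hq0 : (0:ℝ) < q := by linarith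
  -- key facts on [0,x]
  have hbase : ∀ t ∈ Icc (0:ℝ) x, t ^ q < 1 := by
    intro t ht
    calc t ^ q ≤ x ^ q := rpow_le_rpow ht.1 ht.2 hq0.le
    _ < 1 := rpow_lt_one hx0.le hx1 hq0
  -- continuity
  have hcontq : Continuous fun t : ℝ => t ^ q := by
    rw [continuous_iff_continuousAt]
    exact fun t => Real.continuousAt_rpow_const t q (Or.inr hq0.le)
  have hcontg : Continuous fun t : ℝ => 1 + t ^ q / p := by continuity
  have hcontf : ContinuousOn (fun t : ℝ => (1 - t ^ q) ^ (-1/p)) (Icc 0 x) := by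
    apply ContinuousOn.rpow_const ((continuousOn_const.sub hcontq.continuousOn))
    intro t ht
    exact Or.inl (by have := hbase t ht; simp only [Pi.sub_apply]; linarith)
  -- pointwise strict inequality on Ioc 0 x
  have hlt : ∀ t ∈ Ioc (0:ℝ) x, 1 + t ^ q / p < (1 - t ^ q) ^ (-1/p) := by
    intro t ht
    set u := t ^ q with hu
    have hu0 : 0 < u := rpow_pos_of_pos ht.1 q
    have hu1 : u < 1 := hbase t ⟨ht.1.le, ht.2⟩
    have hup : u / p < 1 := by
      rw [div_lt_one hp0]; linarith
    have hber : (1 + (-u)) ^ (1/p) < 1 + (1/p) * (-u) :=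
      rpow_one_add_lt_one_add_mul_self (by linarith) (by linarith)
        (by positivity) (by rw [div_lt_one hp0]; linarith)
    have h1 : (1 - u) ^ (1/p) < 1 - u/p := by
      rw [show (1:ℝ) - u = 1 + (-u) by ring]
      calc (1 + (-u)) ^ (1/p) < 1 + (1/p) * (-u) := hber
        _ = 1 - u/p := by ring
    set A := (1 - u) ^ (1/p) with hA
    have hA0 : 0 < A := rpow_pos_of_pos (by linarith) _
    have heq : (1 - u) ^ (-1/p) = A⁻¹ := by
      rw [hA, neg_div, Real.rpow_neg (by linarith)]
    rw [heq]
    have hAinv : A * A⁻¹ = 1 := mul_inv_cancel₀ hA0.ne'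
    have hup0 : 0 < u / p := div_pos hu0 hp0
    nlinarith [mul_pos hA0 (inv_pos.mpr hA0), sq_nonneg (u/p)]
  -- integral comparison
  have hint : (∫ t in (0:ℝ)..x, (1 + t ^ q / p)) <
      ∫ t in (0:ℝ)..x, (1 - t ^ q) ^ (-1/p) := by
    apply intervalIntegral.integral_lt_integral_of_continuousOn_of_le_of_exists_lt hx0
      hcontg.continuousOn hcontf (fun t ht => (hlt t ht).le)
    exact ⟨x, ⟨hx0.le, le_refl x⟩, hlt x ⟨hx0, le_refl x⟩⟩
  -- compute the left integral
  have hcalc : (∫ t in (0:ℝ)..x, (1 + t ^ q / p)) = x * (1 + x ^ q / (p * (1 + q))) := by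
    have h1 : (∫ t in (0:ℝ)..x, (1 + t ^ q / p)) =
        (∫ t in (0:ℝ)..x, (1:ℝ)) + (∫ t in (0:ℝ)..x, t ^ q) / p := by
      rw [← intervalIntegral.integral_div]
      apply intervalIntegral.integral_add intervalIntegrable_const
      exact ((intervalIntegral.intervalIntegrable_rpow (by left; linarith)).div_const p)
    rw [h1, integral_rpow (Or.inl (by linarith))]
    have h0 : (0:ℝ) ^ (q + 1) = 0 := zero_rpow (by linarith)
    have hxq : x ^ (q + 1) = x ^ q * x := by
      rw [rpow_add hx0, rpow_one]
    simp only [intervalIntegral.integral_const, smul_eq_mul, mul_one, h0, sub_zero, hxq]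
    field_simp
    ring
  rw [arcsinpq, ← hcalc]
  exact hint
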